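/- In a finite directed graph where every non-absorbing vertex has out-degree exactly 2 and in-degree at most 2, if the set of wandering vertices is nonempty then it contains a vertex all of whose in-neighbors are wandering and which has in-degree exactly 2; hence no wandering vertex has an ancestor of in-degree less than 2. -/

import Mathlib

/-- A vertex is absorbing if it has no outgoing edges. -/
def Absorbing {V : Type*} (E : V → V → Prop) (v : V) : Prop := ∀ w, ¬ E v w

/-- A vertex is wandering if no directed path from it reaches an absorbing vertex. -/
def Wandering {V : Type*} (E : V → V → Prop) (v : V) : Prop :=
  ¬ ∃ a, Relation.ReflTransGen E v a ∧ Absorbing E a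

open Classical in
/-- If every non-absorbing vertex has out-degree exactly 2 and in-degree at
most 2, and some vertex is wandering, then there is a wandering vertex all of
whose in-neighbors are wandering and which has in-degree exactly 2; moreover no
wandering vertex has an ancestor of in-degree less than 2. -/
theorem stmt8 {V : Type*} [Fintype V] (E : V → V → Prop)
    (hout : ∀ v, ¬ Absorbing E v → (Finset.univ.filter fun w => E v w).card = 2)
    (hin : ∀ v, ¬ Absorbing E v → (Finset.univ.filter fun w => E w v).card ≤ 2)
    (hne : ∃ v, Wandering E v) :
    (∃ v, Wandering E v ∧ (∀ u, E u v → Wandering E u) ∧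
      (Finset.univ.filter fun u => E u v).card = 2) ∧
    ∀ v, Wandering E v →
      ¬ ∃ w, Relation.TransGen E w v ∧ (Finset.univ.filter fun u => E u w).card < 2 := by
  classical
  have habs : ∀ v, Wandering E v → ¬ Absorbing E v := fun v hv ha =>
    hv ⟨v, Relation.ReflTransGen.refl, ha⟩
  have hstep : ∀ v w, Wandering E v → E v w → Wandering E w := by
    rintro v w hv hvw ⟨a, hwa, ha⟩
    exact hv ⟨a, Relation.ReflTransGen.head hvw hwa, ha⟩
  set W := Finset.univ.filter (fun v => Wandering E v) with hW
  have hmemW : ∀ v, v ∈ W ↔ Wandering E v := by simp [hW]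
  have hout2 : ∀ v ∈ W, (W.filter (fun w => E v w)).card = 2 := by
    intro v hv
    have heq : (W.filter fun w => E v w) = Finset.univ.filter fun w => E v w := by
      ext w
      simp only [Finset.mem_filter, Finset.mem_univ, true_and, hW]
      exact ⟨fun h => h.2, fun h => ⟨hstep v w ((hmemW v).1 hv) h, h⟩⟩
    rw [heq]; exact hout v (habs v ((hmemW v).1 hv))
  have hsum : ∑ w ∈ W, (W.filter fun u => E u w).card = 2 * W.card := by
    have h1 : ∀ w, (W.filter fun u => E u w).card = ∑ u ∈ W, if E u w then 1 else 0 :=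
      fun w => Finset.card_filter _ _
    have h2 : ∀ v, (W.filter fun w => E v w).card = ∑ w ∈ W, if E v w then 1 else 0 :=
      fun v => Finset.card_filter _ _
    calc ∑ w ∈ W, (W.filter fun u => E u w).card
        = ∑ w ∈ W, ∑ u ∈ W, if E u w then 1 else 0 := by simp only [h1]
      _ = ∑ u ∈ W, ∑ w ∈ W, if E u w then 1 else 0 := Finset.sum_comm
      _ = ∑ u ∈ W, (W.filter fun w => E u w).card := by simp only [h2]
      _ = ∑ u ∈ W, 2 := Finset.sum_congr rfl hout2
      _ = 2 * W.card := by rw [Finset.sum_const, smul_eq_mul, mul_comm]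
  have hle : ∀ x ∈ W, (W.filter fun u => E u x).card ≤ 2 := by
    intro x hx
    calc (W.filter fun u => E u x).card
        ≤ (Finset.univ.filter fun u => E u x).card :=
          Finset.card_le_card (Finset.filter_subset_filter _ (Finset.subset_univ W))
      _ ≤ 2 := hin x (habs x ((hmemW x).1 hx))
  have hin2 : ∀ w ∈ W, (W.filter fun u => E u w).card = 2 := by
    by_contra h
    push_neg at h
    obtain ⟨w, hw, hne2⟩ := h
    have hlt : ∑ x ∈ W, (W.filter fun u => E u x).card < ∑ _x ∈ W, 2 :=
      Finset.sum_lt_sum hle ⟨w, hw, lt_of_le_of_ne (hle w hw) hne2⟩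
    rw [hsum, Finset.sum_const, smul_eq_mul, mul_comm] at hlt
    exact lt_irrefl _ hlt
  -- key: for every wandering vertex, all in-neighbors wandering and in-degree 2
  have key : ∀ v, Wandering E v → (∀ u, E u v → Wandering E u) ∧
      (Finset.univ.filter fun u => E u v).card = 2 := by
    intro v hv
    have hvW : v ∈ W := (hmemW v).2 hv
    have hsub : (W.filter fun u => E u v) ⊆ Finset.univ.filter fun u => E u v :=
      Finset.filter_subset_filter _ (Finset.subset_univ W)
    have hcardle : (Finset.univ.filter fun u => E u v).card ≤ (W.filter fun u => E u v).card := by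
      rw [hin2 v hvW]; exact hin v (habs v hv)
    have heq : (W.filter fun u => E u v) = Finset.univ.filter fun u => E u v :=
      Finset.eq_of_subset_of_card_le hsub hcardle
    constructor
    · intro u huv
      have hu : u ∈ W.filter fun u => E u v := by
        rw [heq]; simp [huv]
      exact (hmemW u).1 (Finset.mem_filter.1 hu).1
    · rw [← heq]; exact hin2 v hvW
  refine ⟨?_, ?_⟩
  · obtain ⟨v, hv⟩ := hne
    exact ⟨v, hv, (key v hv).1, (key v hv).2⟩
  · intro v hv
    have hanc : ∀ w, Relation.TransGen E w v → Wandering E w := by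
      intro w hwv
      induction hwv using Relation.TransGen.head_induction_on with
      | single h => exact (key v hv).1 _ h
      | head h _ ih' => exact (key _ ih').1 _ h
    rintro ⟨w, hwv, hcard⟩
    rw [(key w (hanc w hwv)).2] at hcard
    exact lt_irrefl _ hcard
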